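/- arXiv:1904.04538 — 2 statements merged into one kernel-verified Lean document; each statement's English description precedes it below -/
import Mathlib

section
/- Let ε > 0, τ ∈ ℝ, and θ ∈ ℝ with ε⁴θ² ≠ 4. Then ∫₀^τ 2 ( ∫₀^s θ² cos(θ(τ−σ)) e^{2iσ/ε²} dσ ) ds = ( 2τε²θ² / (4 − ε⁴θ²) ) · [ 2i cos(θτ) − ε²θ sin(θτ) ] + ( 2ε⁴θ² / (4 − ε⁴θ²)² ) · [ (4 + ε⁴θ²) cos(θτ) − (4 + ε⁴θ²) e^{2iτ/ε²} + 4iε²θ sin(θτ) ]. -/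
set_option maxHeartbeats 1600000 in
/-- The Gautschi-type quadrature coefficient `ρ_l = ∫₀^τ 2β_l(s) ds`, where
`β_l(s) = ∫₀^s θ² cos(θ(τ−σ)) e^{2iσ/ε²} dσ`. -/
theorem rho_coefficient
    (ε τ θ : ℝ) (hε : 0 < ε) (h : ε ^ 4 * θ ^ 2 ≠ 4) :
    (∫ s in (0:ℝ)..τ, 2 * ∫ σ in (0:ℝ)..s,
        ((θ ^ 2 * Real.cos (θ * (τ - σ)) : ℝ) : ℂ)
          * Complex.exp (2 * Complex.I * (σ : ℂ) / (ε : ℂ) ^ 2))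
      = (2 * (τ : ℂ) * (ε : ℂ) ^ 2 * (θ : ℂ) ^ 2
            / (4 - (ε : ℂ) ^ 4 * (θ : ℂ) ^ 2))
        * (2 * Complex.I * ((Real.cos (θ * τ) : ℝ) : ℂ)
          - (ε : ℂ) ^ 2 * (θ : ℂ) * ((Real.sin (θ * τ) : ℝ) : ℂ))
      + (2 * (ε : ℂ) ^ 4 * (θ : ℂ) ^ 2 / (4 - (ε : ℂ) ^ 4 * (θ : ℂ) ^ 2) ^ 2)
        * ((4 + (ε : ℂ) ^ 4 * (θ : ℂ) ^ 2) * ((Real.cos (θ * τ) : ℝ) : ℂ)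
          - (4 + (ε : ℂ) ^ 4 * (θ : ℂ) ^ 2)
            * Complex.exp (2 * Complex.I * (τ : ℂ) / (ε : ℂ) ^ 2)
          + 4 * Complex.I * (ε : ℂ) ^ 2 * (θ : ℂ)
            * ((Real.sin (θ * τ) : ℝ) : ℂ)) := by
  have hE : (ε : ℂ) ≠ 0 := Complex.ofReal_ne_zero.mpr hε.ne'
  have hE2 : (ε : ℂ) ^ 2 ≠ 0 := pow_ne_zero _ hE
  have h4 : (4 : ℂ) - (ε : ℂ) ^ 4 * (θ : ℂ) ^ 2 ≠ 0 := by
    intro hc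
    apply h
    have : ((ε ^ 4 * θ ^ 2 : ℝ) : ℂ) = ((4 : ℝ) : ℂ) := by
      push_cast
      linear_combination -hc
    exact_mod_cast this
  set E : ℂ := (ε : ℂ) with hEdef
  set T : ℂ := (τ : ℂ) with hTdef
  set Θ : ℂ := (θ : ℂ) with hΘdef
  set A : ℂ := 2 * Complex.I / E ^ 2 with hA
  set P : ℂ := Complex.I * Θ with hP
  have hm : (2 : ℂ) - E ^ 2 * Θ ≠ 0 := by
    intro hc; apply h4; linear_combination (2 + E ^ 2 * Θ) * hc
  have hp : (2 : ℂ) + E ^ 2 * Θ ≠ 0 := by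
    intro hc; apply h4; linear_combination (2 - E ^ 2 * Θ) * hc
  have key1 : A - P = Complex.I * (2 - E ^ 2 * Θ) / E ^ 2 := by
    rw [hA, hP]; field_simp
  have key2 : A + P = Complex.I * (2 + E ^ 2 * Θ) / E ^ 2 := by
    rw [hA, hP]; field_simp
  have h1 : A - P ≠ 0 := by
    rw [key1]
    exact div_ne_zero (mul_ne_zero Complex.I_ne_zero hm) hE2
  have h2 : A + P ≠ 0 := by
    rw [key2]
    exact div_ne_zero (mul_ne_zero Complex.I_ne_zero hp) hE2
  have hexp : ∀ (c : ℂ) (x : ℝ),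
      HasDerivAt (fun y : ℝ => Complex.exp (c * y)) (c * Complex.exp (c * x)) x := by
    intro c x
    have h1' : HasDerivAt (fun z : ℂ => Complex.exp (c * z)) (c * Complex.exp (c * x)) (x : ℂ) := by
      have := (Complex.hasDerivAt_exp (c * x)).comp (x : ℂ)
        ((hasDerivAt_id (x : ℂ)).const_mul c)
      refine this.congr_deriv ?_
      ring
    exact h1'.comp_ofReal
  set G : ℝ → ℂ := fun σ => (Θ ^ 2 / 2) *
      (Complex.exp (P * T) * Complex.exp ((A - P) * σ) / (A - P)
        + Complex.exp (-(P * T)) * Complex.exp ((A + P) * σ) / (A + P)) with hG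
  have hGderiv : ∀ σ : ℝ, HasDerivAt G
      (((θ ^ 2 * Real.cos (θ * (τ - σ)) : ℝ) : ℂ)
        * Complex.exp (2 * Complex.I * (σ : ℂ) / (ε : ℂ) ^ 2)) σ := by
    intro σ
    have d1 := (hexp (A - P) σ).const_mul (Complex.exp (P * T))
    have d2 := (hexp (A + P) σ).const_mul (Complex.exp (-(P * T)))
    have := ((d1.div_const (A - P)).add (d2.div_const (A + P))).const_mul (Θ ^ 2 / 2)
    refine this.congr_deriv ?_
    symm
    have e1 : Complex.exp (Θ * (T - (σ:ℂ)) * Complex.I) * Complex.exp (2 * Complex.I * (σ:ℂ) / E ^ 2)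
        = Complex.exp (P * T) * Complex.exp ((A - P) * (σ:ℂ)) := by
      rw [← Complex.exp_add, ← Complex.exp_add]
      congr 1
      rw [hA, hP]; field_simp; ring
    have e2 : Complex.exp (-(Θ * (T - (σ:ℂ))) * Complex.I) * Complex.exp (2 * Complex.I * (σ:ℂ) / E ^ 2)
        = Complex.exp (-(P * T)) * Complex.exp ((A + P) * (σ:ℂ)) := by
      rw [← Complex.exp_add, ← Complex.exp_add]
      congr 1
      rw [hA, hP]; field_simp; ring
    have c1 : ∀ (x y c : ℂ), c ≠ 0 → x * (c * y) / c = x * y := by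
      intro x y c hc; field_simp
    rw [c1 _ _ _ h1, c1 _ _ _ h2, ← e1, ← e2]
    push_cast
    rw [← hTdef, ← hΘdef]
    simp only [Complex.cos]
    ring
  have hcont : Continuous fun σ : ℝ =>
      ((θ ^ 2 * Real.cos (θ * (τ - σ)) : ℝ) : ℂ)
        * Complex.exp (2 * Complex.I * (σ : ℂ) / (ε : ℂ) ^ 2) := by
    fun_prop
  have inner : ∀ s : ℝ,
      (∫ σ in (0:ℝ)..s, ((θ ^ 2 * Real.cos (θ * (τ - σ)) : ℝ) : ℂ)
        * Complex.exp (2 * Complex.I * (σ : ℂ) / (ε : ℂ) ^ 2)) = G s - G 0 := by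
    intro s
    exact intervalIntegral.integral_eq_sub_of_hasDerivAt
      (fun σ _ => hGderiv σ) (hcont.intervalIntegrable _ _)
  simp only [← hEdef] at inner
  simp only [inner]
  set H : ℝ → ℂ := fun s => Θ ^ 2 *
      (Complex.exp (P * T) * Complex.exp ((A - P) * s) / (A - P) ^ 2
        + Complex.exp (-(P * T)) * Complex.exp ((A + P) * s) / (A + P) ^ 2)
      - 2 * G 0 * s with hH
  have hHderiv : ∀ s : ℝ, HasDerivAt H (2 * (G s - G 0)) s := by
    intro s
    have d1 := (hexp (A - P) s).const_mul (Complex.exp (P * T))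
    have d2 := (hexp (A + P) s).const_mul (Complex.exp (-(P * T)))
    have dlin : HasDerivAt (fun y : ℝ => 2 * G 0 * (y : ℂ)) (2 * G 0) s := by
      have : HasDerivAt (fun y : ℝ => ((y : ℝ) : ℂ)) 1 s := by
        simpa using (hasDerivAt_id s).ofReal_comp
      simpa using this.const_mul (2 * G 0)
    have := (((d1.div_const ((A - P) ^ 2)).add (d2.div_const ((A + P) ^ 2))).const_mul
      (Θ ^ 2)).sub dlin
    refine this.congr_deriv ?_
    symm
    simp only [hG]
    field_simp [h1, h2]
  have hGcont : Continuous G := by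
    simp only [hG]
    fun_prop
  have hint : IntervalIntegrable (fun s : ℝ => 2 * (G s - G 0)) MeasureTheory.volume 0 τ := by
    exact (continuous_const.mul (hGcont.sub continuous_const)).intervalIntegrable _ _
  rw [intervalIntegral.integral_eq_sub_of_hasDerivAt (fun s _ => hHderiv s) hint]
  -- now a pure algebraic identity
  set u : ℂ := Complex.exp (P * T) with hu_def
  have hu : u ≠ 0 := Complex.exp_ne_zero _
  set w : ℂ := Complex.exp (A * T) with hw_def
  have e1 : Complex.exp ((A - P) * T) = w / u := by
    rw [hw_def, hu_def, ← Complex.exp_sub]; congr 1; ring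
  have e2 : Complex.exp ((A + P) * T) = w * u := by
    rw [hw_def, hu_def, ← Complex.exp_add]; congr 1; ring
  have e3 : Complex.exp (-(P * T)) = u⁻¹ := by
    rw [hu_def, ← Complex.exp_neg]
  have hw : Complex.exp (2 * Complex.I * T / E ^ 2) = w := by
    rw [hw_def]; congr 1; rw [hA]; ring
  have hcos : ((Real.cos (θ * τ) : ℝ) : ℂ) = (u + u⁻¹) / 2 := by
    push_cast
    rw [← hTdef, ← hΘdef]
    simp only [Complex.cos]
    rw [hu_def]
    rw [← Complex.exp_neg]
    congr 2
    · congr 1; rw [hP]; ring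
    · congr 1; rw [hP]; ring
  have hsin : ((Real.sin (θ * τ) : ℝ) : ℂ) = (u⁻¹ - u) * Complex.I / 2 := by
    push_cast
    rw [← hTdef, ← hΘdef]
    simp only [Complex.sin]
    rw [hu_def, ← Complex.exp_neg]
    congr 3
    · congr 1; rw [hP]; ring
    · congr 1; rw [hP]; ring
  have q1 : (A - P) ^ 2 = -((2 - E ^ 2 * Θ) ^ 2) / E ^ 4 := by
    rw [key1, div_pow, mul_pow, Complex.I_sq]; ring
  have q2 : (A + P) ^ 2 = -((2 + E ^ 2 * Θ) ^ 2) / E ^ 4 := by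
    rw [key2, div_pow, mul_pow, Complex.I_sq]; ring
  have inv1 : (A - P)⁻¹ = -(Complex.I) * E ^ 2 / (2 - E ^ 2 * Θ) := by
    refine inv_eq_of_mul_eq_one_right ?_
    rw [key1, show Complex.I * (2 - E ^ 2 * Θ) / E ^ 2 * (-(Complex.I) * E ^ 2 / (2 - E ^ 2 * Θ))
        = -(Complex.I * Complex.I) * ((2 - E ^ 2 * Θ) / (2 - E ^ 2 * Θ)) * (E ^ 2 / E ^ 2) from by
      ring, Complex.I_mul_I, div_self hm, div_self hE2]
    ring
  have inv2 : (A + P)⁻¹ = -(Complex.I) * E ^ 2 / (2 + E ^ 2 * Θ) := by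
    refine inv_eq_of_mul_eq_one_right ?_
    rw [key2, show Complex.I * (2 + E ^ 2 * Θ) / E ^ 2 * (-(Complex.I) * E ^ 2 / (2 + E ^ 2 * Θ))
        = -(Complex.I * Complex.I) * ((2 + E ^ 2 * Θ) / (2 + E ^ 2 * Θ)) * (E ^ 2 / E ^ 2) from by
      ring, Complex.I_mul_I, div_self hp, div_self hE2]
    ring
  have hsin2 : (4 : ℂ) * Complex.I * E ^ 2 * Θ * ((Real.sin (θ * τ) : ℝ) : ℂ)
      = 2 * E ^ 2 * Θ * (u - u⁻¹) := by
    rw [hsin, show (4 : ℂ) * Complex.I * E ^ 2 * Θ * ((u⁻¹ - u) * Complex.I / 2)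
        = Complex.I * Complex.I * (2 * E ^ 2 * Θ * (u⁻¹ - u)) from by ring, Complex.I_mul_I]
    ring
  simp only [hH, hG, Complex.ofReal_zero, mul_zero, sub_zero, Complex.exp_zero, mul_one,
    ← hTdef]
  rw [hsin2]
  simp only [hcos, hsin, e1, e2, e3, hw, q1, q2]
  simp only [div_eq_mul_inv, inv1, inv2]
  have hfac4 : (4 : ℂ) - E ^ 4 * Θ ^ 2 = (2 - E ^ 2 * Θ) * (2 + E ^ 2 * Θ) := by ring
  simp only [hfac4]
  set a : ℂ := 2 - E ^ 2 * Θ with ha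
  set b : ℂ := 2 + E ^ 2 * Θ with hb
  clear_value a b
  field_simp [hu, hm, hp]
  have hq : a ^ 2 * b ^ 2 * (2 * (a * (u * b))) ≠ 0 :=
    mul_ne_zero (mul_ne_zero (pow_ne_zero _ hm) (pow_ne_zero _ hp))
      (mul_ne_zero two_ne_zero (mul_ne_zero hm (mul_ne_zero hu hp)))
  have hs : a * b * (u * 2) * ((a * b) ^ 2 * (u * 2 * u)) ≠ 0 :=
    mul_ne_zero (mul_ne_zero (mul_ne_zero hm hp) (mul_ne_zero hu two_ne_zero))
      (mul_ne_zero (pow_ne_zero _ (mul_ne_zero hm hp))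
        (mul_ne_zero (mul_ne_zero hu two_ne_zero) hu))
  rw [ha, hb]
  ring
end

section
/- Let ε > 0, τ ∈ ℝ, and θ ∈ ℝ with ε⁴θ² ≠ 4. Then ∫₀^τ 2θ² cos(θ(τ−s)) e^{is/ε²} cos(s/ε²) ds = θ sin(θτ) − ( ε²θ² / (4 − ε⁴θ²) ) · [ 2i e^{2iτ/ε²} − 2i cos(θτ) + ε²θ sin(θτ) ]. -/
open Complex

private lemma hasDerivAt_cexp_mul (c : ℂ) (s : ℝ) :
    HasDerivAt (fun x : ℝ => Complex.exp (c * x)) (c * Complex.exp (c * s)) s := by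
  have h1 : HasDerivAt (fun x : ℝ => c * (x : ℂ)) c s := by
    simpa using (Complex.ofRealCLM.hasDerivAt (x := s)).const_mul c
  simpa [mul_comm] using h1.cexp

private lemma chi_alg (u t A W : ℂ) (ht : t ≠ 0) (hA : A ≠ 0) (hu1 : 2 - t*u ≠ 0)
    (hu2 : 2 + t*u ≠ 0) (h44 : 4 - u^2*t^2 ≠ 0) :
    t^2 * 2⁻¹ * (A * (W * A⁻¹ * (-I*((2-t*u)⁻¹*u)) + A⁻¹ * -(-I*t⁻¹))
        + A⁻¹ * (W*A*(-I*((2+t*u)⁻¹*u)) + A*(-I*t⁻¹)))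
      - t^2*2⁻¹ * (A*(1*(-I*((2-t*u)⁻¹*u)) + 1*(-(-I*t⁻¹)))
        + A⁻¹*(1*(-I*((2+t*u)⁻¹*u)) + 1*(-I*t⁻¹)))
    = t*((A⁻¹ - A)*I*2⁻¹)
      - u*t^2*(4-u^2*t^2)⁻¹*(2*I*W - 2*I*((A+A⁻¹)*2⁻¹) + u*t*((A⁻¹-A)*I*2⁻¹)) := by
  have h2 : (2:ℂ) ≠ 0 := two_ne_zero
  have h44' : 4 - t^2*u^2 ≠ 0 := by rwa [mul_comm] at h44
  have hD1 : 2 * (A * (2 - t*u) * (A*t) * (A*((2+t*u)*t))) ≠ 0 := by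
    apply mul_ne_zero h2
    apply mul_ne_zero (mul_ne_zero (mul_ne_zero hA hu1) (mul_ne_zero hA ht))
    exact mul_ne_zero hA (mul_ne_zero hu2 ht)
  have hD2 : 2 * ((2 - t*u) * t * (A*((2+t*u)*t))) ≠ 0 := by
    apply mul_ne_zero h2
    exact mul_ne_zero (mul_ne_zero hu1 ht) (mul_ne_zero hA (mul_ne_zero hu2 ht))
  field_simp
  ring

set_option maxHeartbeats 1000000 in
/-- The quadrature coefficient `χ̇_l¹` of the exponential wave integrator:
`∫₀^τ 2θ² cos(θ(τ−s)) e^{is/ε²} cos(s/ε²) ds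
  = θ sin(θτ) − (ε²θ²/(4 − ε⁴θ²)) [2i e^{2iτ/ε²} − 2i cos(θτ) + ε²θ sin(θτ)]`. -/
theorem chi1_dot_coefficient
    (ε τ θ : ℝ) (hε : 0 < ε) (h : ε ^ 4 * θ ^ 2 ≠ 4) :
    (∫ s in (0:ℝ)..τ,
        ((2 * θ ^ 2 * Real.cos (θ * (τ - s)) : ℝ) : ℂ)
          * Complex.exp (Complex.I * (s : ℂ) / (ε : ℂ) ^ 2)
          * ((Real.cos (s / ε ^ 2) : ℝ) : ℂ))
      = (θ : ℂ) * ((Real.sin (θ * τ) : ℝ) : ℂ)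
        - ((ε : ℂ) ^ 2 * (θ : ℂ) ^ 2 / (4 - (ε : ℂ) ^ 4 * (θ : ℂ) ^ 2))
          * (2 * Complex.I * Complex.exp (2 * Complex.I * (τ : ℂ) / (ε : ℂ) ^ 2)
            - 2 * Complex.I * ((Real.cos (θ * τ) : ℝ) : ℂ)
            + (ε : ℂ) ^ 2 * (θ : ℂ) * ((Real.sin (θ * τ) : ℝ) : ℂ)) := by
  by_cases hθ : θ = 0
  · subst hθ; simp
  -- nonzero denominators
  have he2 : ((ε : ℂ)) ^ 2 ≠ 0 := pow_ne_zero _ (by exact_mod_cast hε.ne')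
  have hε0 : (ε : ℂ) ≠ 0 := by exact_mod_cast hε.ne'
  have h4 : ((ε : ℂ)) ^ 4 * (θ : ℂ) ^ 2 ≠ 4 := by
    intro hc; exact h (by exact_mod_cast hc)
  have h44 : (4 - (ε : ℂ) ^ 4 * (θ : ℂ) ^ 2) ≠ 0 := sub_ne_zero.mpr (Ne.symm h4)
  have hθc : (θ : ℂ) ≠ 0 := by exact_mod_cast hθ
  have hd1 : (2 / (ε : ℂ) ^ 2 - θ) ≠ 0 := by
    intro hz; apply h4; field_simp at hz
    linear_combination -((ε:ℂ)^2*θ + 2) * hz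
  have hd3 : (2 / (ε : ℂ) ^ 2 + θ) ≠ 0 := by
    intro hz; apply h4; field_simp at hz
    linear_combination ((ε:ℂ)^2*θ - 2) * hz
  have hc1 : Complex.I * (2 / (ε : ℂ) ^ 2 - θ) ≠ 0 := mul_ne_zero Complex.I_ne_zero hd1
  have hc3 : Complex.I * (2 / (ε : ℂ) ^ 2 + θ) ≠ 0 := mul_ne_zero Complex.I_ne_zero hd3
  have hc4 : Complex.I * (θ : ℂ) ≠ 0 := mul_ne_zero Complex.I_ne_zero hθc
  have hc2 : -(Complex.I * (θ : ℂ)) ≠ 0 := neg_ne_zero.mpr hc4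
  have hF : ∀ s ∈ Set.uIcc (0:ℝ) τ, HasDerivAt (fun s : ℝ =>
      ((θ : ℂ) ^ 2 / 2) *
        (Complex.exp (Complex.I * θ * τ) *
            (Complex.exp ((Complex.I * (2 / (ε : ℂ) ^ 2 - θ)) * s)
                / (Complex.I * (2 / (ε : ℂ) ^ 2 - θ))
              + Complex.exp ((-(Complex.I * θ)) * s) / (-(Complex.I * θ)))
          + Complex.exp (-(Complex.I * θ * τ)) *
            (Complex.exp ((Complex.I * (2 / (ε : ℂ) ^ 2 + θ)) * s)
                / (Complex.I * (2 / (ε : ℂ) ^ 2 + θ))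
              + Complex.exp ((Complex.I * θ) * s) / (Complex.I * θ))))
      (((2 * θ ^ 2 * Real.cos (θ * (τ - s)) : ℝ) : ℂ)
        * Complex.exp (Complex.I * (s : ℂ) / (ε : ℂ) ^ 2)
        * ((Real.cos (s / ε ^ 2) : ℝ) : ℂ)) s := by
    intro s _
    have hd := (((((hasDerivAt_cexp_mul (Complex.I * (2 / (ε : ℂ) ^ 2 - θ)) s).div_const (Complex.I * (2 / (ε : ℂ) ^ 2 - θ))).add
        ((hasDerivAt_cexp_mul (-(Complex.I * θ)) s).div_const (-(Complex.I * θ)))).const_mul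
          (Complex.exp (Complex.I * θ * τ))).add
        ((((hasDerivAt_cexp_mul (Complex.I * (2 / (ε : ℂ) ^ 2 + θ)) s).div_const (Complex.I * (2 / (ε : ℂ) ^ 2 + θ))).add
        ((hasDerivAt_cexp_mul (Complex.I * θ) s).div_const (Complex.I * θ))).const_mul
          (Complex.exp (-(Complex.I * θ * τ))))).const_mul ((θ : ℂ) ^ 2 / 2)
    refine HasDerivAt.congr_deriv hd ?_
    rw [mul_div_cancel_left₀ _ hc1, mul_div_cancel_left₀ _ hc2,
      mul_div_cancel_left₀ _ hc3, mul_div_cancel_left₀ _ hc4]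
    rw [show (Complex.I * (2 / (ε : ℂ) ^ 2 - θ)) * (s:ℂ)
          = (Complex.I * s / (ε:ℂ)^2 + Complex.I * s / (ε:ℂ)^2)
            - Complex.I * θ * s by field_simp; ring,
        show (-(Complex.I * (θ:ℂ))) * (s:ℂ) = -(Complex.I * θ * s) by ring,
        show (Complex.I * (2 / (ε : ℂ) ^ 2 + θ)) * (s:ℂ)
          = (Complex.I * s / (ε:ℂ)^2 + Complex.I * s / (ε:ℂ)^2)
            + Complex.I * θ * s by field_simp; ring,
        show (Complex.I * (θ:ℂ)) * (s:ℂ) = Complex.I * θ * s by ring]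
    simp only [Complex.exp_sub, Complex.exp_add, Complex.exp_neg]
    push_cast
    rw [Complex.cos, Complex.cos]
    rw [show ((θ:ℂ) * ((τ:ℂ) - (s:ℂ))) * Complex.I
          = Complex.I * θ * τ - Complex.I * θ * s by ring,
        show (-((θ:ℂ) * ((τ:ℂ) - (s:ℂ)))) * Complex.I
          = Complex.I * θ * s - Complex.I * θ * τ by ring,
        show ((s:ℂ) / (ε:ℂ) ^ 2) * Complex.I = Complex.I * s / (ε:ℂ)^2 by ring,
        show (-((s:ℂ) / (ε:ℂ) ^ 2)) * Complex.I
          = -(Complex.I * s / (ε:ℂ)^2) by ring]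
    rw [Complex.exp_sub, Complex.exp_sub, Complex.exp_neg]
    have e1 := Complex.exp_ne_zero (Complex.I * (θ:ℂ) * τ)
    have e2 := Complex.exp_ne_zero (Complex.I * (θ:ℂ) * s)
    have e3 := Complex.exp_ne_zero (Complex.I * (s:ℂ) / (ε:ℂ)^2)
    field_simp
  have hint : IntervalIntegrable (fun s : ℝ =>
      ((2 * θ ^ 2 * Real.cos (θ * (τ - s)) : ℝ) : ℂ)
        * Complex.exp (Complex.I * (s : ℂ) / (ε : ℂ) ^ 2)
        * ((Real.cos (s / ε ^ 2) : ℝ) : ℂ)) MeasureTheory.volume 0 τ := by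
    apply Continuous.intervalIntegrable
    fun_prop
  rw [intervalIntegral.integral_eq_sub_of_hasDerivAt hF hint]
  simp only [Complex.ofReal_zero, mul_zero, Complex.exp_zero]
  rw [show (Complex.I * (2 / (ε : ℂ) ^ 2 - θ)) * (τ:ℂ)
        = 2 * Complex.I * τ / (ε:ℂ)^2 - Complex.I * θ * τ by field_simp,
      show (-(Complex.I * (θ:ℂ))) * (τ:ℂ) = -(Complex.I * θ * τ) by ring,
      show (Complex.I * (2 / (ε : ℂ) ^ 2 + θ)) * (τ:ℂ)
        = 2 * Complex.I * τ / (ε:ℂ)^2 + Complex.I * θ * τ by field_simp,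
      show (Complex.I * (θ:ℂ)) * (τ:ℂ) = Complex.I * θ * τ by ring]
  rw [Complex.exp_sub, Complex.exp_add, Complex.exp_neg,
    Complex.ofReal_cos, Complex.ofReal_sin, Complex.cos, Complex.sin]
  rw [show ((θ * τ : ℝ) : ℂ) * Complex.I = Complex.I * θ * τ by push_cast; ring,
      show (-(((θ * τ : ℝ) : ℂ))) * Complex.I = -(Complex.I * θ * τ) by push_cast; ring,
      Complex.exp_neg]
  have hu1 : (2:ℂ) - (θ:ℂ) * (ε:ℂ) ^ 2 ≠ 0 := by
    intro hz; apply h4; linear_combination -((θ:ℂ)*(ε:ℂ)^2 + 2) * hz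
  have hu2 : (2:ℂ) + (θ:ℂ) * (ε:ℂ) ^ 2 ≠ 0 := by
    intro hz; apply h4; linear_combination ((θ:ℂ)*(ε:ℂ)^2 - 2) * hz
  rw [show ((2:ℂ) / (ε:ℂ) ^ 2 - θ) = (2 - θ * (ε:ℂ)^2) / (ε:ℂ)^2 by
        field_simp; try ring,
      show ((2:ℂ) / (ε:ℂ) ^ 2 + θ) = (2 + θ * (ε:ℂ)^2) / (ε:ℂ)^2 by
        field_simp; try ring]
  simp only [div_eq_mul_inv, mul_inv, inv_neg, inv_inv, Complex.inv_I, neg_neg]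
  have hA0 : Complex.exp (Complex.I * θ * τ) ≠ 0 := Complex.exp_ne_zero _
  have h44' : (4:ℂ) - ((ε:ℂ)^2)^2*(θ:ℂ)^2 ≠ 0 := by
    intro hz; apply h44; linear_combination hz
  linear_combination chi_alg ((ε:ℂ)^2) (θ:ℂ) (Complex.exp (Complex.I * θ * τ))
    (Complex.exp (2 * Complex.I * τ * (((ε:ℂ)^2)⁻¹))) hθc hA0 hu1 hu2 h44'
end
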